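/- Let X, Y be vector spaces in separating duality with X given the weak topology σ(X,Y). Let f : X → (−∞,+∞] be lower semicontinuous convex with dom f contained in a compact set, and let V ⊆ X be closed convex with V ∩ cl(dom f) = ∅. Then inf_{y∈Y} (f*(y) + ξ_V*(−y)) = −∞, i.e. sup_{y∈Y} inf_{x∈X} {f(x) + ⟨x,y⟩ − ξ_V*(y)} = +∞. -/

import Mathlib

open Topology

lemma dualRep {X Y : Type*} [AddCommGroup X] [Module ℝ X] [AddCommGroup Y] [Module ℝ Y]
    (B : X →ₗ[ℝ] Y →ₗ[ℝ] ℝ) (g : WeakBilin B →L[ℝ] ℝ) : ∃ y : Y, ∀ x, B x y = g x := by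
  have : Nonempty Y := ⟨0⟩
  set q : Seminorm ℝ (WeakBilin B) := (g : WeakBilin B →ₗ[ℝ] ℝ).toSeminorm with hqdef
  have hq : Continuous q := by
    have : (⇑q : WeakBilin B → ℝ) = fun x => ‖g x‖ := rfl
    rw [this]
    exact continuous_norm.comp g.continuous
  obtain ⟨s, C, hC, hle⟩ := Seminorm.bound_of_continuous B.weakBilin_withSeminorms q hq
  have hker : ⨅ i : s, LinearMap.ker (B.flip (i : Y)) ≤
      LinearMap.ker (g : WeakBilin B →ₗ[ℝ] ℝ) := by
    intro x hx
    simp only [Submodule.mem_iInf, LinearMap.mem_ker] at hx ⊢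
    have hsup : (s.sup B.toSeminormFamily) x ≤ 0 := by
      refine Seminorm.finset_sup_apply_le le_rfl fun i hi => ?_
      have := hx ⟨i, hi⟩
      simp only [LinearMap.flip_apply] at this
      simp [LinearMap.toSeminormFamily, this]
    have := hle x
    have h0 : q x ≤ 0 := by
      calc q x ≤ (C • s.sup B.toSeminormFamily) x := this
        _ = (C : ℝ) * (s.sup B.toSeminormFamily) x := rfl
        _ ≤ 0 := by nlinarith [C.coe_nonneg, hsup]
    have : ‖g x‖ ≤ 0 := h0
    exact (LinearMap.mem_ker (f := (g : WeakBilin B →ₗ[ℝ] ℝ))).2 (norm_le_zero_iff.mp this)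
  have hmem := mem_span_of_iInf_ker_le_ker (𝕜 := ℝ)
    (L := fun i : s => B.flip (i : Y)) (K := (g : WeakBilin B →ₗ[ℝ] ℝ)) hker
  have hsub : Submodule.span ℝ (Set.range fun i : s => B.flip (i : Y)) ≤
      LinearMap.range B.flip := by
    rw [Submodule.span_le]
    rintro _ ⟨i, rfl⟩
    exact ⟨(i : Y), rfl⟩
  obtain ⟨y, hy⟩ := hsub hmem
  exact ⟨y, fun x => LinearMap.congr_fun hy x⟩

lemma lsc_lb {α : Type*} [TopologicalSpace α] {f : α → EReal}
    (hlsc : LowerSemicontinuous f) (hbot : ∀ x, f x ≠ ⊥)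
    {K : Set α} (hK : IsCompact K) (hout : ∀ x ∉ K, f x = ⊤) :
    ∃ m : ℝ, ∀ x, (m : EReal) ≤ f x := by
  classical
  set r : α → ℝ := fun x => if f x = ⊤ then 0 else (f x).toReal - 1 with hr
  have hrlt : ∀ x, (r x : EReal) < f x := by
    intro x
    by_cases h : f x = ⊤
    · simp [r, h]
    · have hco : f x = ((f x).toReal : EReal) := (EReal.coe_toReal h (hbot x)).symm
      simp only [r, if_neg h]
      rw [hco]
      exact_mod_cast sub_one_lt _
  set U : α → Set α := fun x => {z | (r x : EReal) < f z} with hU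
  have hUopen : ∀ x, IsOpen (U x) :=
    fun x => lowerSemicontinuous_iff_isOpen_preimage.1 hlsc (r x)
  have hcov : K ⊆ ⋃ x : α, U x := fun x _ => Set.mem_iUnion.2 ⟨x, hrlt x⟩
  obtain ⟨t, ht⟩ := hK.elim_finite_subcover U hUopen hcov
  set m : ℝ := (insert (0:ℝ) (t.image r)).min' ⟨0, Finset.mem_insert_self _ _⟩ with hm
  refine ⟨m, fun x => ?_⟩
  by_cases hx : x ∈ K
  · obtain ⟨i, hit, hxi⟩ := Set.mem_iUnion₂.1 (ht hx)
    have h1 : m ≤ r i :=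
      Finset.min'_le _ _ (Finset.mem_insert_of_mem (Finset.mem_image_of_mem r hit))
    exact le_trans (EReal.coe_le_coe_iff.2 h1) (le_of_lt hxi)
  · rw [hout x hx]; exact le_top


/-- Lemma `app-A1`, second case: in the same separating-duality setting, if the closed
convex set `V` does not meet the closure of `dom f`, then
`inf_{y∈Y} ( f*(y) + ξ_V*(−y) ) = −∞`. -/
theorem stmt5 {X Y : Type*} [AddCommGroup X] [Module ℝ X] [AddCommGroup Y] [Module ℝ Y]
    (B : X →ₗ[ℝ] Y →ₗ[ℝ] ℝ)
    (hsepX : ∀ x : X, x ≠ 0 → ∃ y : Y, B x y ≠ 0)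
    (hsepY : ∀ y : Y, y ≠ 0 → ∃ x : X, B x y ≠ 0)
    (f : WeakBilin B → EReal)
    (hbot : ∀ x, f x ≠ ⊥)
    (hlsc : LowerSemicontinuous f)
    (hconv : ∀ (x₁ x₂ : WeakBilin B) (t : ℝ), 0 ≤ t → t ≤ 1 →
      f (t • x₁ + (1 - t) • x₂) ≤ (t : EReal) * f x₁ + ((1 - t : ℝ) : EReal) * f x₂)
    (K : Set (WeakBilin B)) (hK : IsCompact K) (hdom : {x | f x ≠ ⊤} ⊆ K)
    (V : Set (WeakBilin B)) (hVcl : IsClosed V) (hVconv : Convex ℝ (V : Set (WeakBilin B)))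
    (hVdom : V ∩ closure {x | f x ≠ ⊤} = ∅) :
    (⨅ y : Y, ((⨆ x : WeakBilin B, ((B x y : EReal) - f x))
        + ⨆ x ∈ V, ((B x (-y) : ℝ) : EReal))) = ⊥ := by
  classical
  -- injectivity and T2
  have hB : Function.Injective (⇑B) := by
    intro x₁ x₂ h
    by_contra hne
    obtain ⟨y, hy⟩ := hsepX (x₁ - x₂) (sub_ne_zero.2 hne)
    apply hy
    rw [map_sub, LinearMap.sub_apply, h, sub_self]
  haveI : T2Space (WeakBilin B) := (WeakBilin.isEmbedding hB).t2Space
  -- lower bound for f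
  obtain ⟨m, hm⟩ : ∃ m : ℝ, ∀ x, (m : EReal) ≤ f x := by
    refine lsc_lb hlsc hbot hK fun x hx => ?_
    by_contra h
    exact hx (hdom h)
  -- convexity of the domain
  have hdomconv : Convex ℝ {x : WeakBilin B | f x ≠ ⊤} := by
    intro x hx y hy a c ha hc hac
    simp only [Set.mem_setOf_eq] at hx hy ⊢
    have h := hconv x y a ha (by linarith)
    have h1 : (1 - a) = c := by linarith
    rw [h1] at h
    intro htop
    have hx' : f x = ((f x).toReal : EReal) := (EReal.coe_toReal hx (hbot x)).symm
    have hy' : f y = ((f y).toReal : EReal) := (EReal.coe_toReal hy (hbot y)).symm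
    rw [htop, hx', hy', ← EReal.coe_mul, ← EReal.coe_mul, ← EReal.coe_add] at h
    exact (EReal.coe_lt_top _).not_ge h
  -- the closure of the domain is compact convex
  have hDcomp : IsCompact (closure {x | f x ≠ ⊤}) :=
    hK.of_isClosed_subset isClosed_closure (closure_minimal hdom hK.isClosed)
  have hDconv : Convex ℝ (closure {x | f x ≠ ⊤}) := hdomconv.closure
  have hdisj : Disjoint (closure {x | f x ≠ ⊤}) V := by
    rw [Set.disjoint_iff_inter_eq_empty, Set.inter_comm]
    exact hVdom
  obtain ⟨g, u, v, hu, huv, hv⟩ :=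
    geometric_hahn_banach_compact_closed hDconv hDcomp hVconv hVcl hdisj
  obtain ⟨y₀, hy₀⟩ := dualRep B g
  rw [iInf_eq_bot]
  intro b hb
  obtain ⟨r, hrb⟩ : ∃ r : ℝ, (r : EReal) < b := by
    induction b using EReal.rec with
    | bot => exact absurd hb (lt_irrefl _)
    | coe a => exact ⟨a - 1, by exact_mod_cast sub_one_lt a⟩
    | top => exact ⟨0, EReal.coe_lt_top 0⟩
  set d : ℝ := v - u with hd
  have hd0 : 0 < d := by simp [hd]; linarith
  set t : ℝ := max 1 ((|r| + |m| + 1) / d) with htdef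
  have ht0 : 0 < t := lt_of_lt_of_le one_pos (le_max_left _ _)
  have htd : |r| + |m| + 1 ≤ t * d := (div_le_iff₀ hd0).mp (le_max_right _ _)
  have key : t * u - m + -(t * v) < r := by
    have h2 : t * u - t * v = -(t * d) := by rw [hd]; ring
    have := neg_abs_le r
    have := neg_abs_le m
    linarith
  refine ⟨t • y₀, ?_⟩
  have boundA : (⨆ x : WeakBilin B, ((B x (t • y₀) : EReal) - f x))
      ≤ ((t * u - m : ℝ) : EReal) := by
    refine iSup_le fun x => ?_
    by_cases hfx : f x = ⊤
    · rw [hfx, EReal.sub_top]; exact bot_le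
    · have hxD : x ∈ closure {x | f x ≠ ⊤} := subset_closure hfx
      have hgx : g x < u := hu x hxD
      have hBx : B x (t • y₀) = t * g x := by
        rw [map_smul, smul_eq_mul, hy₀ x]
      have hfxr : f x = ((f x).toReal : EReal) := (EReal.coe_toReal hfx (hbot x)).symm
      rw [hBx, hfxr, ← EReal.coe_sub]
      apply EReal.coe_le_coe_iff.2
      have hm' : m ≤ (f x).toReal := by
        have := hm x
        rw [hfxr] at this
        exact_mod_cast this
      have : t * g x ≤ t * u := mul_le_mul_of_nonneg_left hgx.le ht0.le
      linarith
  have boundC : (⨆ x ∈ V, ((B x (-(t • y₀)) : ℝ) : EReal))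
      ≤ ((-(t * v) : ℝ) : EReal) := by
    refine iSup₂_le fun x hx => ?_
    have hBx : B x (-(t • y₀)) = -(t * g x) := by
      rw [map_neg, map_smul, smul_eq_mul, hy₀ x]
    rw [hBx]
    apply EReal.coe_le_coe_iff.2
    have : t * v ≤ t * g x := mul_le_mul_of_nonneg_left (hv x hx).le ht0.le
    linarith
  calc (⨆ x : WeakBilin B, ((B x (t • y₀) : EReal) - f x))
        + ⨆ x ∈ V, ((B x (-(t • y₀)) : ℝ) : EReal)
      ≤ ((t * u - m : ℝ) : EReal) + ((-(t * v) : ℝ) : EReal) := add_le_add boundA boundC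
    _ = ((t * u - m + -(t * v) : ℝ) : EReal) := by rw [← EReal.coe_add]
    _ < (r : EReal) := EReal.coe_lt_coe_iff.2 key
    _ < b := hrb
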